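/- Let s ≥ 1 and λ ∈ (0, 1/(3s)). If s²·d(Tx,Ty) ≤ λ[d(x,y)+d(Tx,x)+d(Ty,y)] for all (admissible) x,y with Tx ≠ Ty, then with θ(t) = e^t and φ(t) = t^{3sλ}, T satisfies θ(s²d(Tx,Ty)) ≤ φ[θ((d(x,y)+d(Tx,x)+d(Ty,y))/(3s))] for such x,y; that is, every Reich-type mapping is a θ-φ-Reich-type contraction. -/

import Mathlib

open Filter Topology

def RectB {X : Type*} (d : X → X → ℝ) (s : ℝ) : Prop :=
  (∀ x y, 0 ≤ d x y) ∧
  (∀ x y, d x y = 0 ↔ x = y) ∧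
  (∀ x y, d x y = d y x) ∧
  (∀ x y u v, u ≠ v → u ≠ x → u ≠ y → v ≠ x → v ≠ y →
    d x y ≤ s * (d x u + d u v + d v y))

def ConvTo {X : Type*} (d : X → X → ℝ) (x : ℕ → X) (a : X) : Prop :=
  Tendsto (fun n => d (x n) a) atTop (𝓝 0)

def DCauchy {X : Type*} (d : X → X → ℝ) (x : ℕ → X) : Prop :=
  ∀ ε > 0, ∃ N, ∀ m ≥ N, ∀ n ≥ N, d (x m) (x n) < ε

def IsTheta (θ : ℝ → ℝ) : Prop :=
  (∀ t, 0 < t → 1 < θ t) ∧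
  StrictMonoOn θ (Set.Ioi 0) ∧
  ContinuousOn θ (Set.Ioi 0) ∧
  ∀ x : ℕ → ℝ, (∀ n, 0 < x n) →
    (Tendsto (fun n => θ (x n)) atTop (𝓝 1) ↔ Tendsto x atTop (𝓝 0))

def IsPhi (φ : ℝ → ℝ) : Prop :=
  (∀ t, 1 ≤ t → 1 ≤ φ t) ∧
  MonotoneOn φ (Set.Ici 1) ∧
  ContinuousOn φ (Set.Ici 1) ∧
  ∀ t, 1 < t → Tendsto (fun n => φ^[n] t) atTop (𝓝 1)

def TriAdm {X : Type*} (T : X → X) (α η : X → X → ℝ) : Prop :=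
  (∀ x y, 1 ≤ α x y → 1 ≤ α (T x) (T y)) ∧
  (∀ x y, η x y ≤ 1 → η (T x) (T y) ≤ 1) ∧
  (∀ x y z, 1 ≤ α x y → 1 ≤ α y z → 1 ≤ α x z) ∧
  (∀ x y z, η x y ≤ 1 → η y z ≤ 1 → η x z ≤ 1)

def AEComplete {X : Type*} (d α η : X → X → ℝ) : Prop :=
  ∀ x : ℕ → X, (∀ n, 1 ≤ α (x n) (x (n+1)) ∨ η (x n) (x (n+1)) ≤ 1) →
    DCauchy d x → ∃ a, ConvTo d x a

def AEContinuous {X : Type*} (d α η : X → X → ℝ) (T : X → X) : Prop :=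
  ∀ (x : ℕ → X) (a : X),
    (∀ n, 1 ≤ α (x n) (x (n+1)) ∨ η (x n) (x (n+1)) ≤ 1) →
    ConvTo d x a → ConvTo d (fun n => T (x n)) (T a)

def AERegular {X : Type*} (d α η : X → X → ℝ) : Prop :=
  ∀ (x : ℕ → X) (a : X),
    (∀ n, 1 ≤ α (x n) (x (n+1)) ∨ η (x n) (x (n+1)) ≤ 1) →
    ConvTo d x a → ∀ n, 1 ≤ α (x n) a ∨ η (x n) a ≤ 1

def AEContr {X : Type*} (d α η : X → X → ℝ) (T : X → X) (θ φ : ℝ → ℝ)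
    (s β₁ β₂ β₃ β₄ : ℝ) : Prop :=
  ∀ x y, (1 ≤ α x y ∨ η x y ≤ 1) → 0 < d (T x) (T y) →
    θ (s ^ 2 * d (T x) (T y)) ≤
      φ (θ (β₁ * d x y + β₂ * d (T x) x + β₃ * d (T y) y + β₄ * d y (T x)))

theorem stmt12 {X : Type*} (d α η : X → X → ℝ) (s : ℝ) (hs : 1 ≤ s)
    (hd : RectB d s) (T : X → X) (l : ℝ) (hl0 : 0 < l) (hl : l < 1 / (3 * s))
    (hR : ∀ x y, (1 ≤ α x y ∨ η x y ≤ 1) → T x ≠ T y →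
      s ^ 2 * d (T x) (T y) ≤ l * (d x y + d (T x) x + d (T y) y)) :
    ∀ x y, (1 ≤ α x y ∨ η x y ≤ 1) → T x ≠ T y →
      Real.exp (s ^ 2 * d (T x) (T y)) ≤
        (Real.exp ((d x y + d (T x) x + d (T y) y) / (3 * s))) ^ (3 * s * l) := by
  intro x y hadm hne
  have hs0 : (3 * s) ≠ 0 := by positivity
  rw [show ((Real.exp ((d x y + d (T x) x + d (T y) y) / (3 * s))) ^ (3 * s * l))
      = Real.exp (((d x y + d (T x) x + d (T y) y) / (3 * s)) * (3 * s * l)) by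
    rw [Real.rpow_def_of_pos (Real.exp_pos _), Real.log_exp]]
  rw [Real.exp_le_exp]
  calc s ^ 2 * d (T x) (T y) ≤ l * (d x y + d (T x) x + d (T y) y) := hR x y hadm hne
    _ = (d x y + d (T x) x + d (T y) y) / (3 * s) * (3 * s * l) := by
        field_simp
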